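/- arXiv:2406.01643 — 2 statements merged into one kernel-verified Lean document; each statement's English description precedes it below -/
import Mathlib

section
/- The scalar system ẋ = -(1/τ)x + (K₁/τ)u with output y = x − K₂u, where τ > 0 and K₂ > K₁ > 0, is output strictly negative imaginary: with storage function S(x) = x²/(2K₁), for every ε with 0 < ε ≤ τ/K₁, along trajectories Ṡ ≤ u·ẏ_h − ε·ẏ_h², where y_h = x denotes the state-dependent part of the output. -/
/-- The controller ẋ = -(1/τ)x + (K₁/τ)u, y = x − K₂u, with τ > 0,
K₂ > K₁ > 0, is OSNI with storage S(x) = x²/(2K₁): for every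
0 < ε ≤ τ/K₁, along trajectories Ṡ ≤ u·ẋ − ε·ẋ² (ẏ_h = ẋ). -/
theorem stmt_3 (τ K₁ K₂ ε : ℝ) (hτ : 0 < τ) (hK₁ : 0 < K₁) (hK : K₁ < K₂)
    (hε : 0 < ε) (hετ : ε ≤ τ / K₁)
    (x u : ℝ → ℝ)
    (hx : ∀ t, HasDerivAt x (-(1 / τ) * x t + (K₁ / τ) * u t) t) :
    ∀ t, ∃ d : ℝ, HasDerivAt (fun s => (x s) ^ 2 / (2 * K₁)) d t ∧
      d ≤ u t * (-(1 / τ) * x t + (K₁ / τ) * u t)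
          - ε * (-(1 / τ) * x t + (K₁ / τ) * u t) ^ 2 := by
  intro t
  obtain ⟨f, hf⟩ : ∃ f : ℝ, f = -(1 / τ) * x t + (K₁ / τ) * u t := ⟨_, rfl⟩
  rw [← hf]
  refine ⟨x t * f / K₁, ?_, ?_⟩
  · have h := ((hx t).pow 2).div_const (2 * K₁)
    convert h using 1
    · rfl
    · rfl
    · rfl
    rw [hf]
    field_simp
    ring
  · have hxK : x t / K₁ = u t - τ / K₁ * f := by
      rw [hf]; field_simp; ring
    have h3 : x t * f / K₁ = (u t - τ / K₁ * f) * f := by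
      rw [mul_comm (x t) f, mul_div_assoc, hxK]; ring
    rw [h3]
    nlinarith [mul_nonneg (sub_nonneg.2 hετ) (sq_nonneg f)]
end

section
/- In the one-axis model, the control law Q^{ST}ᵢ = |Vᵢ|·(uᵢ^V + Σ_{j∈Nᵢ} B_{ij}(V_nom cos δ̄_{ij} − |Vⱼ| cos δ_{ij})) substituted into the voltage dynamics γᵢ|Vᵢ|' = Qᵢ^G(|Vᵢ|) − Qᵢ^E + Qᵢ^{ST} divided by |Vᵢ| > 0, with Qᵢ^G(|Vᵢ|) = |Vᵢ|(E^{ex}ᵢ − |Vᵢ|)/(X_d − X_d'), Qᵢ^E = −Σⱼ B_{ij}|Vᵢ||Vⱼ| cos δ_{ij}, and equilibrium condition (E^{ex}ᵢ − V_nom)/(X_d−X_d') + Σⱼ B_{ij}V_nom cos δ̄_{ij} = 0 (including j = i with cos δ̄_{ii}=1), yields the linear decoupled dynamics γᵢ Ṽᵢ' = −αᵢ Ṽᵢ + uᵢ^V, where Ṽᵢ = |Vᵢ| − V_nom and αᵢ = 1/(X_d − X_d') − B_{ii}. -/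
open Finset Real

/-- The feedback-linearizing reactive power control cancels the coupling
reactive power flow, yielding γ Ṽ' = −α Ṽ + u with Ṽ = |Vᵢ| − V_nom and
α = 1/(X_d − X_d') − B_{ii}. Here `Vdot` denotes |Vᵢ|' = Ṽᵢ'. -/
theorem stmt_16 (n : ℕ) (i : Fin n)
    (γ Xd Xd' Eex Vnom u QST Vdot : ℝ)
    (B : Fin n → Fin n → ℝ) (V δ δbar : Fin n → ℝ)
    (hX : Xd' < Xd) (hVi : 0 < V i)
    (hQST : QST = V i * (u + ∑ j ∈ univ.erase i, B i j *
      (Vnom * Real.cos (δbar i - δbar j) - V j * Real.cos (δ i - δ j))))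
    (hdyn : γ * (V i * Vdot) =
      V i * (Eex - V i) / (Xd - Xd')
      - (-(∑ j, B i j * (V i * V j * Real.cos (δ i - δ j)))) + QST)
    (heq : (Eex - Vnom) / (Xd - Xd')
      + ∑ j, B i j * (Vnom * Real.cos (δbar i - δbar j)) = 0) :
    γ * Vdot = -(1 / (Xd - Xd') - B i i) * (V i - Vnom) + u := by
  have hx : Xd - Xd' ≠ 0 := sub_ne_zero.mpr hX.ne'
  set A := ∑ j ∈ univ.erase i, B i j * (Vnom * Real.cos (δbar i - δbar j)) with hA
  set C := ∑ j ∈ univ.erase i, B i j * (V j * Real.cos (δ i - δ j)) with hC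
  have h1 : ∑ j ∈ univ.erase i, B i j *
      (Vnom * Real.cos (δbar i - δbar j) - V j * Real.cos (δ i - δ j)) = A - C := by
    rw [hA, hC, ← Finset.sum_sub_distrib]
    exact Finset.sum_congr rfl fun j _ => by ring
  have h2 : ∑ j, B i j * (V i * V j * Real.cos (δ i - δ j))
      = B i i * (V i * V i) + V i * C := by
    rw [← Finset.add_sum_erase _ _ (mem_univ i), hC, Finset.mul_sum]
    simp only [sub_self, Real.cos_zero, mul_one]
    congr 1
    exact Finset.sum_congr rfl fun j _ => by ring
  have h3 : ∑ j, B i j * (Vnom * Real.cos (δbar i - δbar j)) = B i i * Vnom + A := by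
    rw [← Finset.add_sum_erase _ _ (mem_univ i)]
    simp [hA]
  rw [h3] at heq
  rw [hQST, h1, h2] at hdyn
  have key : V i * (γ * Vdot) = V i * (-(1 / (Xd - Xd') - B i i) * (V i - Vnom) + u) := by
    field_simp at hdyn heq ⊢
    linear_combination hdyn + heq
  exact mul_left_cancel₀ hVi.ne' key
end
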